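/- Let R > 0 and a, b ∈ ℝ, define ζ(u) = (R/u)(1 − bu)/(1 − au), and let v₀ ∈ ℝ \ {0} and w ≠ 0 with 1 − av₀ ≠ 0 and v₀ − a ≠ 0 satisfy ζ(v₀) = w and ζ(1/v₀) = −1/w. Assume ζ'(v₀) ≠ 0 and v₀²ζ'(v₀) + w²ζ'(1/v₀) ≠ 0. Then the function u ↦ ζ(1/u)(ζ(u) − w)/(1 + ζ(u)ζ(1/u)) tends, as u → v₀ with u ≠ v₀, to v₀²ζ'(v₀)/(v₀²ζ'(v₀) + w²ζ'(1/v₀)). -/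

import Mathlib

theorem stmt_10 (R a b : ℝ) (hR : R > 0)
    (ζ : ℝ → ℝ) (hζ : ∀ u, ζ u = (R / u) * (1 - b * u) / (1 - a * u))
    (v₀ w : ℝ) (hv₀ : v₀ ≠ 0) (hw : w ≠ 0)
    (h1 : 1 - a * v₀ ≠ 0) (h2 : v₀ - a ≠ 0)
    (h3 : ζ v₀ = w) (h4 : ζ (1 / v₀) = -1 / w)
    (h5 : deriv ζ v₀ ≠ 0)
    (h6 : v₀ ^ 2 * deriv ζ v₀ + w ^ 2 * deriv ζ (1 / v₀) ≠ 0) :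
    Filter.Tendsto (fun u => ζ (1 / u) * (ζ u - w) / (1 + ζ u * ζ (1 / u)))
      (nhdsWithin v₀ {v₀}ᶜ)
      (nhds (v₀ ^ 2 * deriv ζ v₀ / (v₀ ^ 2 * deriv ζ v₀ + w ^ 2 * deriv ζ (1 / v₀)))) := by
  set A := deriv ζ v₀ with hA
  set B := deriv ζ (1 / v₀) with hB
  have hζfun : ζ = fun u => (R / u) * (1 - b * u) / (1 - a * u) := funext hζ
  have hdiff : ∀ x : ℝ, x ≠ 0 → 1 - a * x ≠ 0 → DifferentiableAt ℝ ζ x := by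
    intro x hx hax
    rw [hζfun]
    exact (((differentiableAt_const R).div differentiableAt_fun_id hx).mul
      ((differentiableAt_const 1).sub ((differentiableAt_const b).mul differentiableAt_fun_id))).div
      ((differentiableAt_const 1).sub ((differentiableAt_const a).mul differentiableAt_fun_id)) hax
  have h1' : (1 : ℝ) / v₀ ≠ 0 := one_div_ne_zero hv₀
  have h2' : 1 - a * (1 / v₀) ≠ 0 := by
    have : 1 - a * (1 / v₀) = (v₀ - a) / v₀ := by field_simp
    rw [this]; exact div_ne_zero h2 hv₀
  have hdv : HasDerivAt ζ A v₀ := (hdiff v₀ hv₀ h1).hasDerivAt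
  have hdw : HasDerivAt ζ B (1 / v₀) := (hdiff _ h1' h2').hasDerivAt
  have hinv : HasDerivAt (fun u : ℝ => 1 / u) (-(v₀ ^ 2)⁻¹) v₀ := by
    simpa [one_div] using hasDerivAt_inv hv₀
  have hcomp : HasDerivAt (fun u => ζ (1 / u)) (B * -(v₀ ^ 2)⁻¹) v₀ :=
    hdw.comp v₀ hinv
  have hN : HasDerivAt (fun u => ζ (1 / u) * (ζ u - w)) (-(1 / w) * A) v₀ := by
    have := hcomp.mul (hdv.sub_const w)
    refine this.congr_deriv ?_
    rw [h3, h4]; ring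
  have hD : HasDerivAt (fun u => 1 + ζ u * ζ (1 / u))
      (-(1 / w) * A + w * (B * -(v₀ ^ 2)⁻¹)) v₀ := by
    have := (hdv.mul hcomp).const_add 1
    refine this.congr_deriv ?_
    rw [h3, h4]; ring
  have hN0 : ζ (1 / v₀) * (ζ v₀ - w) = 0 := by rw [h3]; ring
  have hD0 : 1 + ζ v₀ * ζ (1 / v₀) = 0 := by rw [h3, h4]; field_simp; norm_num
  have hd0 : -(1 / w) * A + w * (B * -(v₀ ^ 2)⁻¹) ≠ 0 := by
    have he : -(1 / w) * A + w * (B * -(v₀ ^ 2)⁻¹)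
        = -(v₀ ^ 2 * A + w ^ 2 * B) / (w * v₀ ^ 2) := by
      field_simp; ring
    rw [he]
    exact div_ne_zero (neg_ne_zero.mpr h6) (mul_ne_zero hw (pow_ne_zero 2 hv₀))
  have hsN := hasDerivAt_iff_tendsto_slope.mp hN
  have hsD := hasDerivAt_iff_tendsto_slope.mp hD
  have hq := hsN.div hsD hd0
  have heq : (fun u => slope (fun u => ζ (1 / u) * (ζ u - w)) v₀ u /
      slope (fun u => 1 + ζ u * ζ (1 / u)) v₀ u)
      =ᶠ[nhdsWithin v₀ {v₀}ᶜ]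
      (fun u => ζ (1 / u) * (ζ u - w) / (1 + ζ u * ζ (1 / u))) := by
    filter_upwards [self_mem_nhdsWithin] with u hu
    have hu' : u - v₀ ≠ 0 := sub_ne_zero.mpr hu
    simp only [slope_def_field, hN0, hD0]
    rw [sub_zero, sub_zero, div_div_div_comm, div_self hu', div_one]
  have hval : -(1 / w) * A / (-(1 / w) * A + w * (B * -(v₀ ^ 2)⁻¹))
      = v₀ ^ 2 * A / (v₀ ^ 2 * A + w ^ 2 * B) := by
    rw [div_eq_div_iff hd0 h6]
    field_simp; ring
  rw [← hval]
  exact Filter.Tendsto.congr' heq hq
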